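/- If G is a connected cubic graph on n vertices admitting a vertex partition {A, J} in which A induces a forest with at most two components, J is independent or near-independent, and (if A induces two components then J is independent), then the decycling number of G equals ⌈(n+2)/4⌉. -/

import Mathlib

open SimpleGraph Finset

section Forest

variable {W : Type*} [DecidableEq W] (G : SimpleGraph W)

noncomputable def rootC (c : G.ConnectedComponent) : W := c.exists_rep.choose

lemma rootC_spec (c : G.ConnectedComponent) : G.connectedComponentMk (rootC G c) = c :=
  c.exists_rep.choose_spec

noncomputable def sroot (x : W) : W := rootC G (G.connectedComponentMk x)

lemma sroot_reach (x : W) : G.Reachable x (sroot G x) :=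
  (SimpleGraph.ConnectedComponent.eq.mp (rootC_spec G _)).symm

lemma sroot_adj {x y : W} (h : G.Adj x y) : sroot G x = sroot G y :=
  congrArg (rootC G) (SimpleGraph.ConnectedComponent.sound h.reachable)

lemma sroot_idem (x : W) : sroot G (sroot G x) = sroot G x := by
  unfold sroot
  rw [rootC_spec]

noncomputable def sdep (x : W) : ℕ := G.dist x (sroot G x)

lemma sdep_root (x : W) : sdep G (sroot G x) = 0 := by
  unfold sdep
  rw [sroot_idem, dist_self]

lemma sdep_ne (hG : G.IsAcyclic) {u v : W} (h : G.Adj u v) : sdep G u ≠ sdep G v := by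
  intro heq
  have hrv : sroot G v = sroot G u := (sroot_adj G h).symm
  set r := sroot G u with hrdef
  obtain ⟨p, hp, hpl⟩ := (sroot_reach G u).exists_path_of_dist
  obtain ⟨q0, hq0, hq0l⟩ := (sroot_reach G v).exists_path_of_dist
  set q : G.Walk v r := q0.copy rfl hrv with hqdef
  have hq : q.IsPath := by rw [hqdef, Walk.isPath_copy]; exact hq0
  have hql : q.length = G.dist v r := by
    rw [hqdef, Walk.length_copy, hq0l, hrv]
  have hus : u ∉ q.support := by
    intro hus
    have h1 := Walk.length_takeUntil_le q hus
    have hspec := Walk.take_spec q hus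
    have hlen : (q.takeUntil u hus).length + (q.dropUntil u hus).length = q.length := by
      conv_rhs => rw [← hspec]
      rw [Walk.length_append]
    have htpos : 0 < (q.takeUntil u hus).length := by
      rcases Nat.eq_zero_or_pos (q.takeUntil u hus).length with h0 | h0
      · exact absurd (Walk.eq_of_length_eq_zero h0) h.ne'
      · exact h0
    have hd : G.dist u r ≤ (q.dropUntil u hus).length := dist_le _
    have h2 : sdep G u = G.dist u r := rfl
    have h3 : sdep G v = G.dist v r := by unfold sdep; rw [hrv]
    omega
  have hc : (Walk.cons h q).IsPath := hq.cons hus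
  have := hG.path_unique ⟨p, hp⟩ ⟨Walk.cons h q, hc⟩
  have hl := congrArg (fun P : G.Path u r => P.1.length) this
  simp only [Walk.length_cons] at hl
  unfold sdep at heq
  rw [hrv] at heq
  omega

lemma sdep_inj (hG : G.IsAcyclic) {w u v : W} (h1 : G.Adj w u) (h2 : G.Adj w v)
    (hu : sdep G u < sdep G w) (hv : sdep G v < sdep G w) : u = v := by
  by_contra hne
  have hru : sroot G u = sroot G w := (sroot_adj G h1).symm
  have hrv : sroot G v = sroot G w := (sroot_adj G h2).symm
  set r := sroot G w with hrdef
  obtain ⟨p0, hp0, hp0l⟩ := (sroot_reach G u).exists_path_of_dist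
  obtain ⟨q0, hq0, hq0l⟩ := (sroot_reach G v).exists_path_of_dist
  set p : G.Walk u r := p0.copy rfl hru with hpdef
  set q : G.Walk v r := q0.copy rfl hrv with hqdef
  have hp : p.IsPath := by rw [hpdef, Walk.isPath_copy]; exact hp0
  have hq : q.IsPath := by rw [hqdef, Walk.isPath_copy]; exact hq0
  have hpl : p.length = G.dist u r := by rw [hpdef, Walk.length_copy, hp0l, hru]
  have hql : q.length = G.dist v r := by rw [hqdef, Walk.length_copy, hq0l, hrv]
  have hwu : sdep G u = G.dist u r := by unfold sdep; rw [hru]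
  have hwv : sdep G v = G.dist v r := by unfold sdep; rw [hrv]
  have hww : sdep G w = G.dist w r := rfl
  have hwp : w ∉ p.support := by
    intro hws
    have := Walk.length_dropUntil_le p hws
    have hd : G.dist w r ≤ (p.dropUntil w hws).length := dist_le _
    omega
  have hwq : w ∉ q.support := by
    intro hws
    have := Walk.length_dropUntil_le q hws
    have hd : G.dist w r ≤ (q.dropUntil w hws).length := dist_le _
    omega
  have hc1 : (Walk.cons h1 p).IsPath := hp.cons hwp
  have hc2 : (Walk.cons h2 q).IsPath := hq.cons hwq
  have heq := hG.path_unique ⟨Walk.cons h1 p, hc1⟩ ⟨Walk.cons h2 q, hc2⟩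
  have hv1 := congrArg (fun P : G.Path w r => P.1.getVert 1) heq
  simp only [Walk.getVert_cons_succ, Walk.getVert_zero] at hv1
  exact hne hv1

open scoped Classical in
lemma forest_edge_bound [Fintype W] [DecidableRel G.Adj] (hG : G.IsAcyclic) [Nonempty W] :
    G.edgeFinset.card + 1 ≤ Fintype.card W := by
  set D : Finset G.Dart := univ.filter (fun d => sdep G d.snd < sdep G d.fst) with hD
  set E : Finset G.Dart := univ.filter (fun d => sdep G d.fst < sdep G d.snd) with hE
  have hmemD : ∀ d : G.Dart, d ∈ D ↔ sdep G d.snd < sdep G d.fst := by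
    intro d; simp [hD]
  have hmemE : ∀ d : G.Dart, d ∈ E ↔ sdep G d.fst < sdep G d.snd := by
    intro d; simp [hE]
  have hcard : D.card = E.card := by
    apply Finset.card_nbij' (fun d => d.symm) (fun d => d.symm)
    · intro d hd
      rw [Finset.mem_coe, hmemD] at hd
      rw [Finset.mem_coe, hmemE]
      exact hd
    · intro d hd
      rw [Finset.mem_coe, hmemE] at hd
      rw [Finset.mem_coe, hmemD]
      exact hd
    · intro d _; exact d.symm_symm
    · intro d _; exact d.symm_symm
  have hunion : D ∪ E = univ := by
    apply Finset.eq_univ_of_forall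
    intro d
    rw [Finset.mem_union, hmemD, hmemE]
    have := sdep_ne G hG d.adj
    omega
  have hdisj : Disjoint D E := by
    rw [Finset.disjoint_left]
    intro d hd he
    rw [hmemD] at hd; rw [hmemE] at he
    omega
  have htot : D.card + E.card = Fintype.card G.Dart := by
    rw [← Finset.card_union_of_disjoint hdisj, hunion, Finset.card_univ]
  have hedges : D.card = G.edgeFinset.card := by
    have := G.dart_card_eq_twice_card_edges
    omega
  obtain ⟨v₀⟩ := ‹Nonempty W›
  have hinj : D.card ≤ (univ.erase (sroot G v₀)).card := by
    apply Finset.card_le_card_of_injOn (fun d => d.fst)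
    · intro d hd
      rw [Finset.mem_coe, Finset.mem_erase]
      refine ⟨?_, Finset.mem_univ _⟩
      intro (hfst : d.fst = sroot G v₀)
      rw [Finset.mem_coe, hmemD] at hd
      rw [hfst] at hd
      rw [sdep_root G v₀] at hd
      omega
    · intro d1 h1 d2 h2 hfst
      rw [Finset.mem_coe, hmemD] at h1 h2
      simp only at hfst
      have hsnd : d1.snd = d2.snd := by
        have ha2 : G.Adj d1.fst d2.snd := by rw [hfst]; exact d2.adj
        have hl2 : sdep G d2.snd < sdep G d1.fst := by rw [hfst]; exact h2
        exact sdep_inj G hG d1.adj ha2 h1 hl2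
      exact Dart.ext _ _ (Prod.ext hfst hsnd)
  have : (univ.erase (sroot G v₀)).card = Fintype.card W - 1 := by
    rw [Finset.card_erase_of_mem (Finset.mem_univ _), Finset.card_univ]
  have hpos : 1 ≤ Fintype.card W := Fintype.card_pos
  omega

end Forest

section Counting

variable {V : Type*} [Fintype V] [DecidableEq V] (G : SimpleGraph V) [DecidableRel G.Adj]

noncomputable local instance (s : Set V) : DecidableRel (G.induce s).Adj :=
  fun a b => inferInstanceAs (Decidable (G.Adj a b))

lemma deg_induce (T : Finset V) (x : (↑T : Set V)) :
    (G.induce (↑T : Set V)).degree x = (T.filter (G.Adj ↑x)).card := by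
  classical
  rw [← card_neighborFinset_eq_degree]
  apply Finset.card_nbij (fun y => ↑y)
  · intro y hy
    rw [Finset.mem_coe, mem_neighborFinset] at hy
    simp only [Finset.mem_coe, Finset.mem_filter]
    exact ⟨y.2, hy⟩
  · intro y1 _ y2 _ h; exact Subtype.ext h
  · intro y hy
    simp only [Finset.coe_filter, Set.mem_setOf_eq] at hy
    exact ⟨⟨y, hy.1⟩, by rw [Finset.mem_coe, mem_neighborFinset]; exact hy.2, rfl⟩

lemma sum_nbr_eq (T : Finset V) :
    ∑ v ∈ T, (T.filter (G.Adj v)).card = 2 * (G.induce (↑T : Set V)).edgeFinset.card := by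
  classical
  rw [← SimpleGraph.sum_degrees_eq_twice_card_edges]
  rw [Finset.sum_subtype T (fun x => Iff.rfl) (fun v => (T.filter (G.Adj v)).card)]
  apply Finset.sum_congr rfl
  intro x _
  exact (deg_induce G T x).symm

lemma sum_nbr_comm (S T : Finset V) :
    ∑ v ∈ S, (T.filter (G.Adj v)).card = ∑ v ∈ T, (S.filter (G.Adj v)).card := by
  simp_rw [Finset.card_filter]
  rw [Finset.sum_comm]
  apply Finset.sum_congr rfl; intro v _; apply Finset.sum_congr rfl; intro w _
  simp [adj_comm]

lemma deg_split (S T : Finset V) (hdisj : Disjoint S T) (hcover : S ∪ T = Finset.univ)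
    (v : V) : G.degree v = (S.filter (G.Adj v)).card + (T.filter (G.Adj v)).card := by
  rw [← card_neighborFinset_eq_degree, neighborFinset_eq_filter, ← hcover,
    Finset.filter_union, Finset.card_union_of_disjoint]
  exact Finset.disjoint_filter_filter hdisj

lemma nbr_le_deg (T : Finset V) (v : V) : (T.filter (G.Adj v)).card ≤ G.degree v := by
  rw [← card_neighborFinset_eq_degree, neighborFinset_eq_filter]
  exact Finset.card_le_card (Finset.filter_subset_filter _ (Finset.subset_univ T))

lemma induce_edge_card (J : Finset V) :
    (G.induce (↑J : Set V)).edgeFinset.card =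
      {e | e ∈ G.edgeSet ∧ ∀ v ∈ e, v ∈ (↑J : Set V)}.ncard := by
  classical
  have hset : {e | e ∈ G.edgeSet ∧ ∀ v ∈ e, v ∈ (↑J : Set V)} =
      ↑(G.edgeFinset.filter (fun e => ∀ v ∈ e, v ∈ J)) := by
    ext e
    simp [Set.mem_setOf_eq, mem_edgeFinset]
  rw [hset, Set.ncard_coe_finset]
  apply Finset.card_bij (fun e _ => Sym2.map Subtype.val e)
  · rintro e he
    induction e with
    | _ a b =>
      rw [mem_edgeFinset, mem_edgeSet] at he
      simp only [Sym2.map_pair_eq, Finset.mem_filter, mem_edgeFinset, mem_edgeSet]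
      refine ⟨he, ?_⟩
      intro v hv
      rw [Sym2.mem_iff] at hv
      rcases hv with h | h <;> subst h
      · exact a.2
      · exact b.2
  · intro e1 _ e2 _ h
    exact Sym2.map.injective Subtype.val_injective h
  · rintro e he
    simp only [Finset.mem_filter, mem_edgeFinset, mem_edgeSet] at he
    induction e with
    | _ a b =>
      obtain ⟨hadj, hmem⟩ := he
      have ha : a ∈ (↑J : Set V) := hmem a (Sym2.mem_mk_left a b)
      have hb : b ∈ (↑J : Set V) := hmem b (Sym2.mem_mk_right a b)
      refine ⟨s(⟨a, ha⟩, ⟨b, hb⟩), ?_, by simp⟩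
      rw [mem_edgeFinset, mem_edgeSet]
      exact hadj

end Counting

section Parts

variable {V : Type*} (G : SimpleGraph V)

def inclHom {s t : Set V} (hst : s ⊆ t) : G.induce s →g G.induce t :=
  ⟨Set.inclusion hst, fun h => h⟩

lemma walk_restrict {s t : Set V} (hst : s ⊆ t) {y z : ↑t}
    (p : (G.induce t).Walk y z) (hy : ↑y ∈ s)
    (hsupp : ∀ w ∈ p.support, ↑w ∈ s) :
    ∃ (hz : ↑z ∈ s) (q : (G.induce s).Walk ⟨y, hy⟩ ⟨z, hz⟩),
      q.map (inclHom G hst) = p := by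
  induction p with
  | nil => exact ⟨hy, Walk.nil, rfl⟩
  | @cons a b c hab p ih =>
    have hb : ↑b ∈ s := hsupp b (by simp [Walk.support_cons])
    obtain ⟨hz, q, hq⟩ := ih hb (fun w hw => hsupp w (by simp [Walk.support_cons, hw]))
    refine ⟨hz, Walk.cons (by exact hab : (G.induce s).Adj ⟨a, hy⟩ ⟨b, hb⟩) q, ?_⟩
    subst hq; rfl

lemma acyclic_parts {A₁ A₂ : Finset V} [DecidableEq V]
    (hcross : ∀ u ∈ A₁, ∀ v ∈ A₂, ¬ G.Adj u v)
    (h1 : (G.induce (↑A₁ : Set V)).IsAcyclic)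
    (h2 : (G.induce (↑A₂ : Set V)).IsAcyclic) :
    (G.induce (↑(A₁ ∪ A₂) : Set V)).IsAcyclic := by
  have hsub1 : (↑A₁ : Set V) ⊆ ↑(A₁ ∪ A₂) := by
    intro x hx; simp only [Finset.coe_union, Set.mem_union]; exact Or.inl hx
  have hsub2 : (↑A₂ : Set V) ⊆ ↑(A₁ ∪ A₂) := by
    intro x hx; simp only [Finset.coe_union, Set.mem_union]; exact Or.inr hx
  have hstay1 : ∀ {y z : ↑(↑(A₁ ∪ A₂) : Set V)} (p : (G.induce ↑(A₁ ∪ A₂)).Walk y z),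
      (↑y : V) ∈ A₁ → ∀ w ∈ p.support, (↑w : V) ∈ A₁ := by
    intro y z p
    induction p with
    | nil => intro hy w hw; rw [Walk.support_nil, List.mem_singleton] at hw; subst hw; exact hy
    | @cons a b c hab p ih =>
      intro hy w hw
      have hb : (↑b : V) ∈ A₁ := by
        have hbm : (↑b : V) ∈ A₁ ∪ A₂ := by
          have := b.2; simpa using this
        rw [Finset.mem_union] at hbm
        rcases hbm with h | h
        · exact h
        · exact absurd hab (hcross _ hy _ h)
      rw [Walk.support_cons, List.mem_cons] at hw
      rcases hw with h | h
      · subst h; exact hy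
      · exact ih hb w h
  have hstay2 : ∀ {y z : ↑(↑(A₁ ∪ A₂) : Set V)} (p : (G.induce ↑(A₁ ∪ A₂)).Walk y z),
      (↑y : V) ∈ A₂ → ∀ w ∈ p.support, (↑w : V) ∈ A₂ := by
    intro y z p
    induction p with
    | nil => intro hy w hw; rw [Walk.support_nil, List.mem_singleton] at hw; subst hw; exact hy
    | @cons a b c hab p ih =>
      intro hy w hw
      have hb : (↑b : V) ∈ A₂ := by
        have hbm : (↑b : V) ∈ A₁ ∪ A₂ := by
          have := b.2; simpa using this
        rw [Finset.mem_union] at hbm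
        rcases hbm with h | h
        · exact absurd hab.symm (hcross _ h _ hy)
        · exact h
      rw [Walk.support_cons, List.mem_cons] at hw
      rcases hw with h | h
      · subst h; exact hy
      · exact ih hb w h
  intro x c hc
  have hx : (↑x : V) ∈ A₁ ∪ A₂ := by have := x.2; simpa using this
  rw [Finset.mem_union] at hx
  rcases hx with hx | hx
  · obtain ⟨hz, q, hq⟩ := walk_restrict G hsub1 c hx (hstay1 c hx)
    have : q.IsCycle := by
      rw [← Walk.map_isCycle_iff_of_injective
        (f := inclHom G hsub1) (p := q) (Set.inclusion_injective hsub1), hq]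
      exact hc
    exact h1 q this
  · obtain ⟨hz, q, hq⟩ := walk_restrict G hsub2 c hx (hstay2 c hx)
    have : q.IsCycle := by
      rw [← Walk.map_isCycle_iff_of_injective
        (f := inclHom G hsub2) (p := q) (Set.inclusion_injective hsub2), hq]
      exact hc
    exact h2 q this

end Parts

/-- If a connected cubic graph on `n` vertices has a stable decycling partition `{A, J}`
(`A` induces a forest with at most two components, `J` is independent or near-independent,
and in the two-component case `J` is independent), then the decycling number of `G`
equals `⌈(n+2)/4⌉` (written in natural number arithmetic as `(n+2+3)/4`). -/
theorem stmt10 {V : Type*} [Fintype V] [DecidableEq V] (G : SimpleGraph V)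
    [DecidableRel G.Adj] (hconn : G.Connected) (hcubic : ∀ v, G.degree v = 3)
    (A J : Finset V) (hdisj : Disjoint A J) (hcover : A ∪ J = Finset.univ)
    (hstable :
      ((G.induce (↑A : Set V)).IsTree ∧
        ((∀ u ∈ J, ∀ v ∈ J, ¬ G.Adj u v) ∨
          {e | e ∈ G.edgeSet ∧ ∀ v ∈ e, v ∈ (↑J : Set V)}.ncard = 1)) ∨
      ((∃ A₁ A₂ : Finset V, Disjoint A₁ A₂ ∧ A₁ ∪ A₂ = A ∧
          A₁.Nonempty ∧ A₂.Nonempty ∧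
          (G.induce (↑A₁ : Set V)).IsTree ∧ (G.induce (↑A₂ : Set V)).IsTree ∧
          ∀ u ∈ A₁, ∀ v ∈ A₂, ¬ G.Adj u v) ∧
        (∀ u ∈ J, ∀ v ∈ J, ¬ G.Adj u v))) :
    IsLeast {k : ℕ | ∃ S : Finset V, (G.induce ((↑S : Set V)ᶜ)).IsAcyclic ∧ S.card = k}
      ((Fintype.card V + 2 + 3) / 4) := by
  classical
  set n := Fintype.card V with hn
  have hnonempty : Nonempty V := hconn.nonempty
  have hnpos : 1 ≤ n := Fintype.card_pos
  have hAJ : A.card + J.card = n := by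
    rw [← Finset.card_union_of_disjoint hdisj, hcover, Finset.card_univ]
  have hAcompl : (↑J : Set V)ᶜ = (↑A : Set V) := by
    have : A = Jᶜ := by
      ext v
      simp only [Finset.mem_compl]
      constructor
      · intro hv hvJ
        exact Finset.disjoint_left.mp hdisj hv hvJ
      · intro hv
        have : v ∈ A ∪ J := hcover ▸ Finset.mem_univ v
        rw [Finset.mem_union] at this
        tauto
    rw [this, Finset.coe_compl]
  -- key counting identity for the partition
  have hcross : ∑ v ∈ A, (J.filter (G.Adj v)).card = ∑ v ∈ J, (A.filter (G.Adj v)).card :=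
    sum_nbr_comm G A J
  have hdegA : ∑ v ∈ A, G.degree v = 3 * A.card := by
    rw [Finset.sum_congr rfl (fun v _ => hcubic v), Finset.sum_const, smul_eq_mul, mul_comm]
  have hdegJ : ∑ v ∈ J, G.degree v = 3 * J.card := by
    rw [Finset.sum_congr rfl (fun v _ => hcubic v), Finset.sum_const, smul_eq_mul, mul_comm]
  have hsplitA : ∑ v ∈ A, G.degree v =
      ∑ v ∈ A, (A.filter (G.Adj v)).card + ∑ v ∈ A, (J.filter (G.Adj v)).card := by
    rw [← Finset.sum_add_distrib]
    exact Finset.sum_congr rfl (fun v _ => deg_split G A J hdisj hcover v)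
  have hsplitJ : ∑ v ∈ J, G.degree v =
      ∑ v ∈ J, (A.filter (G.Adj v)).card + ∑ v ∈ J, (J.filter (G.Adj v)).card := by
    rw [← Finset.sum_add_distrib]
    exact Finset.sum_congr rfl (fun v _ => deg_split G A J hdisj hcover v)
  -- membership: J has the right cardinality
  have hJcard : 4 * J.card = n + 2 ∨ 4 * J.card = n + 4 := by
    rcases hstable with ⟨htree, hind⟩ | ⟨⟨A₁, A₂, hd12, hu12, hne1, hne2, ht1, ht2, hc12⟩, hind⟩
    · have heA : (G.induce (↑A : Set V)).edgeFinset.card + 1 = A.card := by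
        have := htree.card_edgeFinset
        simpa using this
      have hsA : ∑ v ∈ A, (A.filter (G.Adj v)).card =
          2 * (G.induce (↑A : Set V)).edgeFinset.card := sum_nbr_eq G A
      rcases hind with hind | hnear
      · have hsJ : ∑ v ∈ J, (J.filter (G.Adj v)).card = 0 := by
          apply Finset.sum_eq_zero
          intro v hv
          rw [Finset.card_eq_zero, Finset.filter_eq_empty_iff]
          exact fun {u} hu => hind v hv u hu
        left; omega
      · have hsJ : ∑ v ∈ J, (J.filter (G.Adj v)).card = 2 := by
          rw [sum_nbr_eq G J, induce_edge_card G J, hnear]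
        right; omega
    · have h12card : A₁.card + A₂.card = A.card := by
        rw [← Finset.card_union_of_disjoint hd12, hu12]
      have he1 : (G.induce (↑A₁ : Set V)).edgeFinset.card + 1 = A₁.card := by
        have := ht1.card_edgeFinset
        simpa using this
      have he2 : (G.induce (↑A₂ : Set V)).edgeFinset.card + 1 = A₂.card := by
        have := ht2.card_edgeFinset
        simpa using this
      have hsA : ∑ v ∈ A, (A.filter (G.Adj v)).card =
          2 * (G.induce (↑A₁ : Set V)).edgeFinset.card +
          2 * (G.induce (↑A₂ : Set V)).edgeFinset.card := by
        rw [← hu12, Finset.sum_union hd12]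
        have hA1 : ∀ v ∈ A₁, ((A₁ ∪ A₂).filter (G.Adj v)).card = (A₁.filter (G.Adj v)).card := by
          intro v hv
          congr 1
          rw [Finset.filter_union]
          have : A₂.filter (G.Adj v) = ∅ := by
            rw [Finset.filter_eq_empty_iff]
            exact fun {u} hu => hc12 v hv u hu
          rw [this, Finset.union_empty]
        have hA2 : ∀ v ∈ A₂, ((A₁ ∪ A₂).filter (G.Adj v)).card = (A₂.filter (G.Adj v)).card := by
          intro v hv
          congr 1
          rw [Finset.filter_union]
          have : A₁.filter (G.Adj v) = ∅ := by
            rw [Finset.filter_eq_empty_iff]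
            exact fun {u} hu => fun hadj => hc12 u hu v hv hadj.symm
          rw [this, Finset.empty_union]
        rw [Finset.sum_congr rfl hA1, Finset.sum_congr rfl hA2,
          sum_nbr_eq G A₁, sum_nbr_eq G A₂]
        convert rfl
      have hsJ : ∑ v ∈ J, (J.filter (G.Adj v)).card = 0 := by
        apply Finset.sum_eq_zero
        intro v hv
        rw [Finset.card_eq_zero, Finset.filter_eq_empty_iff]
        exact fun {u} hu => hind v hv u hu
      right; omega
  constructor
  · -- membership: J witnesses
    refine ⟨J, ?_, by omega⟩
    rw [hAcompl]
    rcases hstable with ⟨htree, _⟩ | ⟨⟨A₁, A₂, hd12, hu12, hne1, hne2, ht1, ht2, hc12⟩, _⟩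
    · exact htree.IsAcyclic
    · rw [← hu12]
      exact acyclic_parts G hc12 ht1.IsAcyclic ht2.IsAcyclic
  · -- lower bound
    rintro k ⟨S, hac, rfl⟩
    have hceq : ((↑S : Set V)ᶜ) = (↑(Sᶜ) : Set V) := (Finset.coe_compl S).symm
    rw [hceq] at hac
    set T := Sᶜ with hT
    have hST : S.card + T.card = n := by
      have h1 : S.card ≤ n := by rw [hn, ← Finset.card_univ]; exact Finset.card_le_univ S
      rw [hT, Finset.card_compl, ← hn]
      omega
    rcases Finset.eq_empty_or_nonempty T with hTe | hTne
    · rw [hTe, Finset.card_empty] at hST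
      omega
    · have : Nonempty (↑T : Set V) := by
        obtain ⟨x, hx⟩ := hTne
        exact ⟨⟨x, hx⟩⟩
      have hforest : (G.induce (↑T : Set V)).edgeFinset.card + 1 ≤ T.card := by
        have := forest_edge_bound (G.induce (↑T : Set V)) hac
        simpa using this
      have hdegT : ∑ v ∈ T, G.degree v = 3 * T.card := by
        rw [Finset.sum_congr rfl (fun v _ => hcubic v), Finset.sum_const, smul_eq_mul, mul_comm]
      have hsplitT : ∑ v ∈ T, G.degree v =
          ∑ v ∈ T, (T.filter (G.Adj v)).card + ∑ v ∈ T, (S.filter (G.Adj v)).card := by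
        rw [← Finset.sum_add_distrib]
        refine Finset.sum_congr rfl (fun v _ => ?_)
        rw [deg_split G T S ?_ ?_ v]
        · rw [hT]
          exact disjoint_compl_left
        · rw [hT]
          ext w
          simp only [Finset.mem_union, Finset.mem_compl, Finset.mem_univ, iff_true]
          tauto
      have hTT : ∑ v ∈ T, (T.filter (G.Adj v)).card =
          2 * (G.induce (↑T : Set V)).edgeFinset.card := sum_nbr_eq G T
      have hTS : ∑ v ∈ T, (S.filter (G.Adj v)).card ≤ 3 * S.card := by
        rw [sum_nbr_comm G T S]
        calc ∑ v ∈ S, (T.filter (G.Adj v)).card ≤ ∑ v ∈ S, G.degree v :=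
              Finset.sum_le_sum (fun v _ => nbr_le_deg G T v)
          _ = 3 * S.card := by
              rw [Finset.sum_congr rfl (fun v _ => hcubic v), Finset.sum_const,
                smul_eq_mul, mul_comm]
      omega
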